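/- Let G be a finite tree on at least 2 vertices and let φ be an eigenvector of the Laplacian matrix L = D − A with eigenvalue λ₂(G), normalized so that Σ_{v ∈ V} φ(v)² = 1. Then the positive part of φ satisfies Σ_{v ∈ V} max{φ(v), 0} ≥ diam(G)^{1/2} / 8, and likewise Σ_{v ∈ V} max{−φ(v), 0} ≥ diam(G)^{1/2} / 8. -/

import Mathlib

open Matrix Finset RealInnerProductSpace

section Helpers

set_option linter.unusedSectionVars false
set_option maxHeartbeats 1000000

variable {V : Type*} [DecidableEq V] {G : SimpleGraph V} {x y : V}

/-! ### Tree/metric helper lemmas -/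

private lemma mem_geodesic_dist_add {a b y : V} (p : G.Walk a b) (hp : p.length = G.dist a b)
    (hy : y ∈ p.support) : G.dist a y + G.dist y b ≤ G.dist a b := by
  have hsplit := p.take_spec hy
  have hlen : (p.takeUntil y hy).length + (p.dropUntil y hy).length = p.length := by
    rw [← SimpleGraph.Walk.length_append, hsplit]
  calc G.dist a y + G.dist y b
      ≤ (p.takeUntil y hy).length + (p.dropUntil y hy).length :=
        Nat.add_le_add (SimpleGraph.dist_le _) (SimpleGraph.dist_le _)
    _ = G.dist a b := by rw [hlen, hp]

private lemma isPath_concat {a b c : V} {p : G.Walk a b} (hp : p.IsPath) (h : G.Adj b c)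
    (hc : c ∉ p.support) : (p.concat h).IsPath := by
  rw [← SimpleGraph.Walk.isPath_reverse_iff, SimpleGraph.Walk.reverse_concat]
  refine SimpleGraph.Walk.IsPath.cons (hp.reverse) ?_
  rwa [SimpleGraph.Walk.support_reverse, List.mem_reverse]

private lemma tree_dist_ne (hT : G.IsTree) {u v : V} (huv : G.Adj u v) (x : V) :
    G.dist x u ≠ G.dist x v := by
  intro heq
  have hconn := hT.isConnected
  obtain ⟨P, hPp, hPl⟩ := hconn.exists_path_of_dist x u
  obtain ⟨Q, hQp, hQl⟩ := hconn.exists_path_of_dist x v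
  have hdistuv : G.dist u v = 1 := SimpleGraph.dist_eq_one_iff_adj.mpr huv
  have huQ : u ∉ Q.support := by
    intro hu
    have := mem_geodesic_dist_add Q hQl hu
    omega
  have hQ' : (Q.concat huv.symm).IsPath := isPath_concat hQp huv.symm huQ
  have := (hT.existsUnique_path x u).unique hPp hQ'
  have hlen := congrArg SimpleGraph.Walk.length this
  rw [hPl, SimpleGraph.Walk.length_concat, hQl] at hlen
  omega

private lemma tree_dist_succ (hT : G.IsTree) {u v : V} (huv : G.Adj u v) (x : V)
    (h : G.dist x u < G.dist x v) : G.dist x v = G.dist x u + 1 := by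
  have htri : G.dist x v ≤ G.dist x u + G.dist u v := hT.isConnected.dist_triangle
  rw [SimpleGraph.dist_eq_one_iff_adj.mpr huv] at htri
  omega

private lemma tree_dist_dichotomy (hT : G.IsTree) {u v : V} (huv : G.Adj u v) (x : V) :
    G.dist x v = G.dist x u + 1 ∨ G.dist x u = G.dist x v + 1 := by
  rcases lt_or_gt_of_ne (tree_dist_ne hT huv x) with h | h
  · exact Or.inl (tree_dist_succ hT huv x h)
  · exact Or.inr (tree_dist_succ hT huv.symm x h)

private lemma tree_edge_mem_path (hT : G.IsTree) {u v : V} (huv : G.Adj u v) :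
    ∀ {x y : V} (w : G.Walk x y), w.IsPath →
      G.dist x u < G.dist x v → G.dist y v < G.dist y u → s(u,v) ∈ w.edges := by
  have hconn := hT.isConnected
  intro x y w
  induction w with
  | nil => intro _ h1 h2; omega
  | @cons x z y hadj w' ih =>
    intro hwp h1 h2
    rcases lt_or_gt_of_ne (tree_dist_ne hT huv z) with hz | hz
    · have hmem := ih ((SimpleGraph.Walk.cons_isPath_iff hadj w').mp hwp).1 hz h2
      rw [SimpleGraph.Walk.edges_cons]
      exact List.mem_cons_of_mem _ hmem
    · -- sign change across the edge (x, z)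
      have e1 : G.dist x v = G.dist x u + 1 := tree_dist_succ hT huv x h1
      have e2 : G.dist z u = G.dist z v + 1 := tree_dist_succ hT huv.symm z hz
      have hxz1 : G.dist x z = 1 := SimpleGraph.dist_eq_one_iff_adj.mpr hadj
      have hcomm : ∀ a b : V, G.dist a b = G.dist b a := fun a b => SimpleGraph.dist_comm
      have hgood : G.dist z u = G.dist x u + 1 := by
        rcases lt_trichotomy (G.dist u x) (G.dist u z) with h | h | h
        · have h' := tree_dist_succ hT hadj u h
          rw [hcomm u x, hcomm u z] at h'
          omega
        · exact absurd h (tree_dist_ne hT hadj u)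
        · have hstep := tree_dist_succ hT hadj.symm u h
          rw [hcomm u x, hcomm u z] at hstep
          have htri : G.dist x v ≤ G.dist x z + G.dist z v := hconn.dist_triangle
          omega
      have hzv : G.dist z v = G.dist x u + 1 - 1 := by omega
      by_cases hk : G.dist x u = 0
      · have hxu : x = u := (hconn.dist_eq_zero_iff).mp hk
        have hzv0 : G.dist z v = 0 := by omega
        have hzv' : z = v := (hconn.dist_eq_zero_iff).mp hzv0
        rw [SimpleGraph.Walk.edges_cons]
        subst hxu; subst hzv'
        exact List.mem_cons_self
      · exfalso
        obtain ⟨P, hPp, hPl⟩ := hconn.exists_path_of_dist u x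
        have hzP : z ∉ P.support := by
          intro hmem
          have := mem_geodesic_dist_add P hPl hmem
          rw [hcomm u z, hcomm z x] at this
          rw [hcomm u x] at this
          omega
        have hPA : (P.concat hadj).IsPath := isPath_concat hPp hadj hzP
        obtain ⟨R, hRp, hRl⟩ := hconn.exists_path_of_dist v z
        have huR : u ∉ R.support := by
          intro hmem
          have := mem_geodesic_dist_add R hRl hmem
          rw [hcomm v u, hcomm u z, hcomm v z] at this
          have hd1 : G.dist u v = 1 := SimpleGraph.dist_eq_one_iff_adj.mpr huv
          omega
        have hPB : (SimpleGraph.Walk.cons huv R).IsPath :=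
          (SimpleGraph.Walk.cons_isPath_iff huv R).mpr ⟨hRp, huR⟩
        have hEQ : P.concat hadj = SimpleGraph.Walk.cons huv R :=
          (hT.existsUnique_path u z).unique hPA hPB
        have hvPB : v ∈ (SimpleGraph.Walk.cons huv R).support := by
          rw [SimpleGraph.Walk.support_cons]
          exact List.mem_cons_of_mem _ R.start_mem_support
        rw [← hEQ, SimpleGraph.Walk.support_concat] at hvPB
        rw [List.mem_append] at hvPB
        rcases hvPB with hvP | hvz
        · have := mem_geodesic_dist_add P hPl hvP
          have hd1 : G.dist u v = 1 := SimpleGraph.dist_eq_one_iff_adj.mpr huv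
          rw [hcomm v x, hcomm u x] at this
          omega
        · have hvz' : v = z := by simpa using hvz
          have hds : G.dist z z = 0 := SimpleGraph.dist_self
          rw [hvz'] at hzv
          omega

private lemma dist_getVert_le (hconn : G.Connected) (w : G.Walk x y) :
    ∀ i : ℕ, G.dist x (w.getVert i) ≤ i := by
  induction w with
  | nil => intro i; simp [SimpleGraph.Walk.getVert, SimpleGraph.dist_self]
  | @cons x z y h w' ih =>
    intro i
    cases i with
    | zero => simp [SimpleGraph.Walk.getVert_zero, SimpleGraph.dist_self]
    | succ n =>
      have h1 : G.dist x (w'.getVert n) ≤ G.dist x z + G.dist z (w'.getVert n) :=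
        hconn.dist_triangle
      have h2 : G.dist x z ≤ 1 := le_of_eq (SimpleGraph.dist_eq_one_iff_adj.mpr h)
      have h3 := ih n
      have h4 : (SimpleGraph.Walk.cons h w').getVert (n+1) = w'.getVert n :=
        SimpleGraph.Walk.getVert_cons_succ w' h
      rw [h4]
      omega

private lemma getVert_dist_le (hconn : G.Connected) (w : G.Walk x y) :
    ∀ i : ℕ, G.dist (w.getVert i) y ≤ w.length - i := by
  induction w with
  | nil => intro i; simp [SimpleGraph.Walk.getVert, SimpleGraph.dist_self]
  | @cons x z y h w' ih =>
    intro i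
    cases i with
    | zero =>
      have h2 : G.dist x y ≤ (SimpleGraph.Walk.cons h w').length :=
        SimpleGraph.dist_le _
      simpa [SimpleGraph.Walk.getVert_zero] using h2
    | succ n =>
      have h3 := ih n
      have h4 : (SimpleGraph.Walk.cons h w').getVert (n+1) = w'.getVert n :=
        SimpleGraph.Walk.getVert_cons_succ w' h
      rw [h4, SimpleGraph.Walk.length_cons]
      omega

private lemma getVert_dist_eq (hconn : G.Connected) (w : G.Walk x y) {i : ℕ} (hi : i ≤ w.length)
    (hw : w.length = G.dist x y) :
    G.dist x (w.getVert i) = i ∧ G.dist (w.getVert i) y = w.length - i := by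
  have h1 := dist_getVert_le hconn w i
  have h2 := getVert_dist_le hconn w i
  have h3 : G.dist x y ≤ G.dist x (w.getVert i) + G.dist (w.getVert i) y :=
    hconn.dist_triangle
  omega

/-! ### telescoping along a walk -/

private lemma walk_telescope (φ : V → ℝ) (w : G.Walk x y) :
    (φ x - φ y)^2 ≤ (w.length : ℝ) *
      (w.darts.map (fun d => (φ d.toProd.1 - φ d.toProd.2)^2)).sum := by
  induction w with
  | nil => simp
  | @cons x z y h w' ih =>
    have hE : 0 ≤ (w'.darts.map (fun d => (φ d.toProd.1 - φ d.toProd.2)^2)).sum := by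
      apply List.sum_nonneg
      intro a ha
      obtain ⟨d, _, rfl⟩ := List.mem_map.mp ha
      positivity
    set E := (w'.darts.map (fun d => (φ d.toProd.1 - φ d.toProd.2)^2)).sum with hEdef
    have hdarts : ((SimpleGraph.Walk.cons h w').darts.map
        (fun d => (φ d.toProd.1 - φ d.toProd.2)^2)).sum = (φ x - φ z)^2 + E := by
      rw [SimpleGraph.Walk.darts_cons, List.map_cons, List.sum_cons]
    rw [hdarts, SimpleGraph.Walk.length_cons]
    set s := φ x - φ z
    set t := φ z - φ y
    set n := w'.length
    have hst : φ x - φ y = s + t := by ring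
    rw [hst]
    rcases Nat.eq_zero_or_pos n with hn | hn
    · rw [hn] at ih
      simp only [Nat.cast_zero, zero_mul] at ih
      have ht : t = 0 := by nlinarith [sq_nonneg t]
      rw [ht]
      push_cast
      nlinarith
    · have hn1 : (1:ℝ) ≤ n := by exact_mod_cast hn
      have key : (n:ℝ) * ((n + 1) * (s^2 + E) - (s + t)^2) ≥ 0 := by
        nlinarith [sq_nonneg ((n:ℝ)*s - t), ih, hE]
      have hnpos : (0:ℝ) < n := by linarith
      push_cast
      nlinarith [key]

/-! ### numeric sums -/

private lemma sum_range_sq' (n : ℕ) : (∑ i ∈ Finset.range n, (i:ℝ)^2) = n*(n-1)*(2*n-1)/6 := by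
  induction n with
  | zero => simp
  | succ m ih =>
    rw [Finset.sum_range_succ, ih]
    push_cast
    ring

private lemma sum_range_id'' (n : ℕ) : (∑ i ∈ Finset.range n, (i:ℝ)) = n*(n-1)/2 := by
  induction n with
  | zero => simp
  | succ m ih =>
    rw [Finset.sum_range_succ, ih]
    push_cast
    ring

private lemma var_lower (n : ℕ) (hn : 1 ≤ n) (c : ℝ) :
    (n:ℝ)^3/3 ≤ ∑ i ∈ Finset.range (n+1), ((2*i - n : ℝ) - c)^2 := by
  have hexp : ∀ i : ℕ, ((2*i - n : ℝ) - c)^2 =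
      4*(i:ℝ)^2 - (4*n+4*c)*(i:ℝ) + (n+c)^2 := by intro i; ring
  have hnice : ∑ i ∈ Finset.range (n+1), ((2*i - n : ℝ) - c)^2 =
      4*(∑ i ∈ Finset.range (n+1), (i:ℝ)^2)
      - (4*n+4*c)*(∑ i ∈ Finset.range (n+1), (i:ℝ))
      + (n+1)*(n+c)^2 := by
    simp_rw [hexp]
    rw [Finset.sum_add_distrib, Finset.sum_sub_distrib, ← Finset.mul_sum, ← Finset.mul_sum,
      Finset.sum_const, Finset.card_range, nsmul_eq_mul]
    push_cast
    ring
  rw [hnice, sum_range_sq', sum_range_id'']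
  have hn1 : (1:ℝ) ≤ n := by exact_mod_cast hn
  push_cast
  have hn0 : (0:ℝ) ≤ n := by positivity
  nlinarith [sq_nonneg c, mul_nonneg hn0 (sq_nonneg c), hn1]

end Helpers

open Matrix

/-- `(l, φ)` is an eigenpair of the (combinatorial) graph Laplacian `L = D - A`. -/
def SimpleGraph.IsLapEigenpair {V : Type*} [Fintype V] [DecidableEq V]
    (G : SimpleGraph V) [DecidableRel G.Adj] (l : ℝ) (φ : V → ℝ) : Prop :=
  φ ≠ 0 ∧ G.lapMatrix ℝ *ᵥ φ = l • φ

/-- `l` is the second-smallest eigenvalue `λ₂(G)` of the Laplacian of a connected graph,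
i.e. its smallest positive eigenvalue. -/
def SimpleGraph.IsSecondLapEigenvalue {V : Type*} [Fintype V] [DecidableEq V]
    (G : SimpleGraph V) [DecidableRel G.Adj] (l : ℝ) : Prop :=
  (∃ φ, G.IsLapEigenpair l φ) ∧ 0 < l ∧
    ∀ μ : ℝ, 0 < μ → (∃ ψ, G.IsLapEigenpair μ ψ) → l ≤ μ

set_option maxHeartbeats 2000000

section Rayleigh

variable {V : Type*} [Fintype V] [DecidableEq V] (G : SimpleGraph V) [DecidableRel G.Adj]

private lemma rayleigh_aux (hconn : G.Connected) (l : ℝ) (hl : G.IsSecondLapEigenvalue l)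
    (f : V → ℝ) (hf : ∑ v, f v = 0) :
    l * (∑ v, f v ^ 2) ≤ f ⬝ᵥ (G.lapMatrix ℝ *ᵥ f) := by
  have hsymm : (G.lapMatrix ℝ).IsSymm := G.isSymm_lapMatrix ℝ
  have hH : (G.lapMatrix ℝ).IsHermitian := by
    rwa [Matrix.IsHermitian, conjTranspose_eq_transpose_of_trivial]
  have hpsd : (G.lapMatrix ℝ).PosSemidef := G.posSemidef_lapMatrix ℝ
  let B := hH.eigenvectorBasis
  let eig := hH.eigenvalues
  let F : EuclideanSpace ℝ V := WithLp.toLp 2 f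
  let c : V → ℝ := fun i => B.repr F i
  have hcd : ∀ i, c i = (B i : V → ℝ) ⬝ᵥ f := by
    intro i
    show B.repr F i = _
    rw [B.repr_apply_apply]
    simp [PiLp.inner_apply, dotProduct, RCLike.inner_apply, mul_comm]
    rfl
  have heq : ∀ i, G.lapMatrix ℝ *ᵥ (B i : V → ℝ) = eig i • (B i : V → ℝ) := fun i =>
    hH.mulVec_eigenvectorBasis i
  have hcd2 : ∀ i, B.repr (WithLp.toLp 2 (G.lapMatrix ℝ *ᵥ f) : EuclideanSpace ℝ V) i = eig i * c i := by
    intro i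
    rw [B.repr_apply_apply]
    have h1 : ⟪B i, (WithLp.toLp 2 (G.lapMatrix ℝ *ᵥ f : V → ℝ) : EuclideanSpace ℝ V)⟫ =
        (B i : V → ℝ) ⬝ᵥ (G.lapMatrix ℝ *ᵥ f) := by
      simp [PiLp.inner_apply, dotProduct, RCLike.inner_apply]
      exact Finset.sum_congr rfl fun x _ => mul_comm _ _
    rw [h1, Matrix.dotProduct_mulVec, ← Matrix.mulVec_transpose, hsymm.eq, heq i,
      smul_dotProduct, hcd i, smul_eq_mul]
  have hnorm2 : ∑ v, f v ^ 2 = ∑ i, (c i)^2 := by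
    have h1 : ⟪F, F⟫ = ∑ v, f v ^ 2 := by
      simp only [PiLp.inner_apply, RCLike.inner_apply, conj_trivial, pow_two]
      rfl
    have h2 : ⟪B.repr F, B.repr F⟫ = ∑ i, (c i)^2 := by
      simp only [PiLp.inner_apply, RCLike.inner_apply, conj_trivial, pow_two]
      rfl
    rw [← h1, ← B.repr.inner_map_map F F, h2]
  have hquad : f ⬝ᵥ (G.lapMatrix ℝ *ᵥ f) = ∑ i, eig i * (c i)^2 := by
    have h1 : ⟪F, (WithLp.toLp 2 (G.lapMatrix ℝ *ᵥ f : V → ℝ) : EuclideanSpace ℝ V)⟫ =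
        f ⬝ᵥ (G.lapMatrix ℝ *ᵥ f) := by
      simp [PiLp.inner_apply, dotProduct, RCLike.inner_apply]
      exact Finset.sum_congr rfl fun x _ => mul_comm _ _
    rw [← h1, ← B.repr.inner_map_map]
    simp only [PiLp.inner_apply, RCLike.inner_apply, conj_trivial]
    refine Finset.sum_congr rfl fun i _ => ?_
    rw [hcd2 i]
    show eig i * c i * c i = eig i * (c i)^2
    ring
  have hzero : ∀ i, eig i = 0 → c i = 0 := by
    intro i h0
    have hker : G.lapMatrix ℝ *ᵥ (B i : V → ℝ) = 0 := by rw [heq i, h0, zero_smul]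
    have hcst : ∀ u w : V, (B i : V → ℝ) u = (B i : V → ℝ) w := by
      have hq : Matrix.toLinearMap₂' ℝ (G.lapMatrix ℝ) (B i : V → ℝ) (B i : V → ℝ) = 0 := by
        rw [Matrix.toLinearMap₂'_apply', hker, dotProduct_zero]
      rw [SimpleGraph.lapMatrix_toLinearMap₂'_apply'_eq_zero_iff_forall_reachable] at hq
      exact fun u w => hq u w (hconn.preconnected u w)
    obtain ⟨u0⟩ := hconn.nonempty
    have h2 : c i = (B i : V → ℝ) u0 * ∑ v, f v := by
      rw [hcd i, dotProduct, Finset.mul_sum]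
      exact Finset.sum_congr rfl fun v _ => by rw [hcst v u0]
    rw [h2, hf, mul_zero]
  have hmin : ∀ i, eig i ≠ 0 → l ≤ eig i := by
    intro i hne
    refine hl.2.2 (eig i) (lt_of_le_of_ne (hpsd.eigenvalues_nonneg i) (Ne.symm hne)) ?_
    refine ⟨(B i : V → ℝ), ?_, heq i⟩
    intro hbz
    have hn := B.orthonormal.1 i
    have hz : (B i : EuclideanSpace ℝ V) = 0 := WithLp.ofLp_injective 2 (funext fun v => congrFun hbz v)
    rw [hz] at hn
    simp at hn
  rw [hnorm2, hquad, Finset.mul_sum]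
  refine Finset.sum_le_sum fun i _ => ?_
  rcases eq_or_ne (eig i) 0 with h0 | h0
  · rw [hzero i h0, h0]; ring_nf; rfl
  · exact mul_le_mul_of_nonneg_right (hmin i h0) (sq_nonneg _)

end Rayleigh

/-- For a finite tree on at least two vertices, the positive and negative parts of a unit
Fiedler vector each have `ℓ¹`-mass at least `diam(G)^{1/2} / 8`. -/
theorem sum_posPart_fiedler_ge_sqrt_diam_div_eight {V : Type*} [Fintype V] [DecidableEq V]
    (G : SimpleGraph V) [DecidableRel G.Adj] (hT : G.IsTree) (hcard : 2 ≤ Fintype.card V)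
    (l : ℝ) (hl : G.IsSecondLapEigenvalue l) (φ : V → ℝ)
    (hpair : G.IsLapEigenpair l φ) (hnorm : ∑ v : V, φ v ^ 2 = 1) :
    Real.sqrt (G.diam : ℝ) / 8 ≤ ∑ v : V, max (φ v) 0 ∧
      Real.sqrt (G.diam : ℝ) / 8 ≤ ∑ v : V, max (-φ v) 0 := by
  classical
  have hconn := hT.isConnected
  have hl0 : 0 < l := hl.2.1
  have hne : Nonempty V := Fintype.card_pos_iff.mp (by omega)
  -- quadratic form of the Laplacian
  have hquad : ∀ x : V → ℝ, x ⬝ᵥ (G.lapMatrix ℝ *ᵥ x) =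
      (∑ i : V, ∑ j : V, if G.Adj i j then (x i - x j)^2 else 0) / 2 := fun x => by
    rw [← Matrix.toLinearMap₂'_apply', SimpleGraph.lapMatrix_toLinearMap₂']
  have hphiL : G.lapMatrix ℝ *ᵥ φ = l • φ := hpair.2
  -- energy of φ equals 2l
  have hWphi : (∑ i : V, ∑ j : V, if G.Adj i j then (φ i - φ j)^2 else 0) = 2 * l := by
    have h1 : φ ⬝ᵥ (G.lapMatrix ℝ *ᵥ φ) = l := by
      rw [hphiL]
      simp only [dotProduct, Pi.smul_apply, smul_eq_mul]
      have : ∑ v, φ v * (l * φ v) = l * ∑ v, φ v ^2 := by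
        rw [Finset.mul_sum]; exact Finset.sum_congr rfl fun v _ => by ring
      rw [this, hnorm, mul_one]
    have h2 := hquad φ
    rw [h1] at h2
    linarith
  -- sum of φ is 0
  have hsum0 : ∑ v, φ v = 0 := by
    have h1 : (fun _ : V => (1:ℝ)) ⬝ᵥ (G.lapMatrix ℝ *ᵥ φ) = l * ∑ v, φ v := by
      rw [hphiL]
      simp only [dotProduct, Pi.smul_apply, smul_eq_mul, one_mul]
      rw [Finset.mul_sum]
    have h2 : (fun _ : V => (1:ℝ)) ⬝ᵥ (G.lapMatrix ℝ *ᵥ φ) = 0 := by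
      rw [Matrix.dotProduct_mulVec, ← Matrix.mulVec_transpose, (G.isSymm_lapMatrix ℝ).eq,
        SimpleGraph.lapMatrix_mulVec_const_eq_zero, zero_dotProduct]
    have h3 : l * ∑ v, φ v = 0 := by rw [← h1, h2]
    rcases mul_eq_zero.mp h3 with h | h
    · exact absurd h (ne_of_gt hl0)
    · exact h
  -- diameter basics
  have hediam : G.ediam ≠ ⊤ := by
    obtain ⟨u, v, huv⟩ := G.exists_edist_eq_ediam_of_finite
    rw [← huv]
    obtain ⟨w⟩ := hconn.preconnected u v
    exact ((SimpleGraph.Walk.edist_le w).trans_lt (WithTop.coe_lt_top _)).ne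
  have hD1 : 1 ≤ G.diam := by
    obtain ⟨u, v, huvne⟩ := Fintype.exists_pair_of_one_lt_card (α := V) (by omega)
    have h1 := hconn.pos_dist_of_ne huvne
    have h2 := SimpleGraph.dist_le_diam (G := G) hediam (u := u) (v := v)
    omega
  obtain ⟨x₀, x₁, hx⟩ := SimpleGraph.exists_dist_eq_diam (G := G)
  obtain ⟨p, hPp, hPl⟩ := hconn.exists_path_of_dist x₀ x₁
  have hplen : p.length = G.diam := by rw [hPl, hx]
  set D := G.diam with hDdef
  set g : V → ℝ := fun v => (G.dist x₀ v : ℝ) - (G.dist x₁ v : ℝ) with hgdef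
  -- edge analysis for the test function
  have hedge : ∀ i j : V, G.Adj i j →
      (g i - g j)^2 ≤ 4 ∧ ((g i - g j) ≠ 0 → s(i,j) ∈ p.edges) := by
    intro i j hij
    rcases tree_dist_dichotomy hT hij x₀ with ca | ca <;>
      rcases tree_dist_dichotomy hT hij x₁ with cb | cb
    · -- a j = a i + 1, b j = b i + 1 : no change
      have h0 : g i - g j = 0 := by
        simp only [hgdef]
        rw [ca, cb]
        push_cast
        ring
      rw [h0]
      exact ⟨by norm_num, fun h => absurd rfl h⟩
    · -- a j = a i + 1, b i = b j + 1 : on geodesic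
      have hmem : s(i,j) ∈ p.edges := by
        refine tree_edge_mem_path hT hij p hPp ?_ ?_ <;> omega
      have h0 : g i - g j = -2 := by
        simp only [hgdef]
        rw [ca, cb]
        push_cast
        ring
      rw [h0]
      exact ⟨by norm_num, fun _ => hmem⟩
    · -- a i = a j + 1, b j = b i + 1 : on geodesic (reversed)
      have hmem : s(j,i) ∈ p.edges := by
        refine tree_edge_mem_path hT hij.symm p hPp ?_ ?_ <;> omega
      have h0 : g i - g j = 2 := by
        simp only [hgdef]
        rw [ca, cb]
        push_cast
        ring
      rw [h0]
      refine ⟨by norm_num, fun _ => ?_⟩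
      rwa [Sym2.eq_swap]
    · have h0 : g i - g j = 0 := by
        simp only [hgdef]
        rw [ca, cb]
        push_cast
        ring
      rw [h0]
      exact ⟨by norm_num, fun h => absurd rfl h⟩
  -- energy of the test function is at most 8 D
  have key1 : (∑ i : V, ∑ j : V, if G.Adj i j then (g i - g j)^2 else 0) ≤ 8 * D := by
    have hstep : ∀ i j : V, (if G.Adj i j then (g i - g j)^2 else 0) ≤
        (if s(i,j) ∈ p.edges.toFinset then (4:ℝ) else 0) := by
      intro i j
      by_cases hij : G.Adj i j
      · rcases eq_or_ne (g i - g j) 0 with h0 | h0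
        · rw [if_pos hij, h0]
          split_ifs <;> norm_num
        · have hmem := (hedge i j hij).2 h0
          rw [if_pos hij, if_pos (List.mem_toFinset.mpr hmem)]
          exact (hedge i j hij).1
      · rw [if_neg hij]
        split_ifs <;> norm_num
    have hcount : ((Finset.univ ×ˢ Finset.univ).filter
        (fun q : V × V => s(q.1, q.2) ∈ p.edges.toFinset)).card ≤ 2 * p.edges.toFinset.card := by
      apply Finset.card_le_mul_card_image_of_maps_to
        (f := fun q : V × V => s(q.1, q.2)) (t := p.edges.toFinset)
      · intro q hq
        exact (Finset.mem_filter.mp hq).2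
      · intro e he
        induction e with
        | _ xx yy =>
          have hsub : ((Finset.univ ×ˢ Finset.univ).filter
              (fun q : V × V => s(q.1, q.2) ∈ p.edges.toFinset)).filter
              (fun q : V × V => s(q.1, q.2) = s(xx, yy)) ⊆ {(xx, yy), (yy, xx)} := by
            intro q hq
            have h1 := (Finset.mem_filter.mp hq).2
            rcases Sym2.eq_iff.mp h1 with ⟨h2, h3⟩ | ⟨h2, h3⟩
            · simp [Finset.mem_insert, Prod.ext_iff, h2, h3]
            · simp [Finset.mem_insert, Prod.ext_iff, h2, h3]
          calc _ ≤ ({(xx, yy), (yy, xx)} : Finset (V × V)).card := Finset.card_le_card hsub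
            _ ≤ 2 := Finset.card_insert_le _ _ |>.trans (by simp)
    calc (∑ i : V, ∑ j : V, if G.Adj i j then (g i - g j)^2 else 0)
        ≤ ∑ i : V, ∑ j : V, (if s(i,j) ∈ p.edges.toFinset then (4:ℝ) else 0) :=
          Finset.sum_le_sum fun i _ => Finset.sum_le_sum fun j _ => hstep i j
      _ = ∑ q ∈ Finset.univ ×ˢ Finset.univ,
            (if s(q.1,q.2) ∈ p.edges.toFinset then (4:ℝ) else 0) := by
          rw [← Finset.sum_product']
      _ = ∑ q ∈ (Finset.univ ×ˢ Finset.univ).filter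
            (fun q : V × V => s(q.1,q.2) ∈ p.edges.toFinset), (4:ℝ) :=
          (Finset.sum_filter _ _).symm
      _ = 4 * ((Finset.univ ×ˢ Finset.univ).filter
            (fun q : V × V => s(q.1,q.2) ∈ p.edges.toFinset)).card := by
          rw [Finset.sum_const, nsmul_eq_mul, mul_comm]
      _ ≤ 4 * (2 * p.edges.toFinset.card) := by
          have := hcount
          exact_mod_cast mul_le_mul_of_nonneg_left (by exact_mod_cast this) (by norm_num)
      _ ≤ 8 * D := by
          have h1 : p.edges.toFinset.card ≤ p.edges.length := p.edges.toFinset_card_le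
          have h2 : p.edges.length = p.length := SimpleGraph.Walk.length_edges p
          have h3 : p.edges.toFinset.card ≤ D := by omega
          have h3R : (p.edges.toFinset.card : ℝ) ≤ (D : ℝ) := by exact_mod_cast h3
          push_cast
          linarith
  -- variance lower bound for the test function
  have hgv : ∀ i : ℕ, i ≤ D → g (p.getVert i) = 2*(i:ℝ) - D := by
    intro i hi
    have hip : i ≤ p.length := by omega
    obtain ⟨ha, hb⟩ := getVert_dist_eq hconn p hip hPl
    have hb' : G.dist x₁ (p.getVert i) = D - i := by
      rw [SimpleGraph.dist_comm, hb, hplen]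
    simp only [hgdef]
    rw [ha, hb', Nat.cast_sub hi]
    ring
  have hinj : ∀ i ∈ Finset.range (D+1), ∀ j ∈ Finset.range (D+1),
      p.getVert i = p.getVert j → i = j := by
    intro i hi j hj hij
    rw [Finset.mem_range] at hi hj
    have hi' : i ≤ p.length := by omega
    have hj' : j ≤ p.length := by omega
    have h1 := (getVert_dist_eq hconn p hi' hPl).1
    have h2 := (getVert_dist_eq hconn p hj' hPl).1
    rw [hij] at h1
    omega
  have key2 : ∀ cc : ℝ, (D:ℝ)^3/3 ≤ ∑ v, (g v - cc)^2 := by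
    intro cc
    have h1 := var_lower D hD1 cc
    have h2 : ∑ i ∈ Finset.range (D+1), ((2*(i:ℝ) - D) - cc)^2
        = ∑ v ∈ (Finset.range (D+1)).image p.getVert, (g v - cc)^2 := by
      rw [Finset.sum_image hinj]
      refine Finset.sum_congr rfl fun i hi => ?_
      rw [Finset.mem_range] at hi
      rw [hgv i (by omega)]
    have h3 : ∑ v ∈ (Finset.range (D+1)).image p.getVert, (g v - cc)^2 ≤ ∑ v, (g v - cc)^2 :=
      Finset.sum_le_sum_of_subset_of_nonneg (Finset.subset_univ _) (fun v _ _ => sq_nonneg _)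
    calc (D:ℝ)^3/3 ≤ ∑ i ∈ Finset.range (D+1), ((2*(i:ℝ) - D) - cc)^2 := h1
      _ = _ := h2
      _ ≤ _ := h3
  -- Rayleigh quotient application : l * D^2 ≤ 12
  have hcardR : (0:ℝ) < (Fintype.card V : ℝ) := by
    have : 0 < Fintype.card V := by omega
    exact_mod_cast this
  set cc := (∑ v, g v) / (Fintype.card V : ℝ) with hccdef
  set f : V → ℝ := fun v => g v - cc with hfdef
  have hfsum : ∑ v, f v = 0 := by
    simp only [hfdef]
    rw [Finset.sum_sub_distrib, Finset.sum_const, Finset.card_univ, nsmul_eq_mul, hccdef]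
    field_simp
    ring
  have hray := rayleigh_aux G hconn l hl f hfsum
  have hfL : f ⬝ᵥ (G.lapMatrix ℝ *ᵥ f) ≤ 4 * D := by
    rw [hquad f]
    have hsame : (∑ i : V, ∑ j : V, if G.Adj i j then (f i - f j)^2 else 0)
        = (∑ i : V, ∑ j : V, if G.Adj i j then (g i - g j)^2 else 0) := by
      refine Finset.sum_congr rfl fun i _ => Finset.sum_congr rfl fun j _ => ?_
      by_cases hij : G.Adj i j
      · rw [if_pos hij, if_pos hij]
        simp only [hfdef]
        ring
      · rw [if_neg hij, if_neg hij]
    rw [hsame]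
    linarith [key1]
  have hD0 : (0:ℝ) < D := by
    have : 0 < D := hD1
    exact_mod_cast this
  have hlD2 : l * (D:ℝ)^2 ≤ 12 := by
    have h1 : l * ((D:ℝ)^3/3) ≤ 4 * D := by
      have h2 := key2 cc
      have h4 : ∑ v, f v ^ 2 = ∑ v, (g v - cc)^2 :=
        Finset.sum_congr rfl fun v _ => by simp only [hfdef]
      calc l * ((D:ℝ)^3/3) ≤ l * ∑ v, f v ^2 := by
            rw [h4]; exact mul_le_mul_of_nonneg_left h2 hl0.le
        _ ≤ f ⬝ᵥ (G.lapMatrix ℝ *ᵥ f) := hray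
        _ ≤ 4 * D := hfL
    have h5 : l * (D:ℝ)^2 * D ≤ 12 * D := by nlinarith [h1]
    exact le_of_mul_le_mul_right h5 hD0
  -- extrema of φ
  obtain ⟨vp, _, hvp⟩ := Finset.exists_max_image Finset.univ φ ⟨Classical.arbitrary V, Finset.mem_univ _⟩
  obtain ⟨vm, _, hvm⟩ := Finset.exists_min_image Finset.univ φ ⟨Classical.arbitrary V, Finset.mem_univ _⟩
  set M := max (φ vp) (-(φ vm)) with hMdef
  have hvp0 : 0 ≤ φ vp := by
    by_contra hcon
    push_neg at hcon
    have h1 : ∑ v, φ v ≤ ∑ _v : V, φ vp := Finset.sum_le_sum fun v _ => hvp v (Finset.mem_univ v)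
    rw [Finset.sum_const, Finset.card_univ, nsmul_eq_mul, hsum0] at h1
    nlinarith [hcardR]
  have hvm0 : φ vm ≤ 0 := by
    by_contra hcon
    push_neg at hcon
    have h1 : ∑ _v : V, φ vm ≤ ∑ v, φ v := Finset.sum_le_sum fun v _ => hvm v (Finset.mem_univ v)
    rw [Finset.sum_const, Finset.card_univ, nsmul_eq_mul, hsum0] at h1
    nlinarith [hcardR]
  have hMle : M ≤ φ vp - φ vm := by
    apply max_le <;> linarith
  have habs : ∀ v, |φ v| ≤ M := by
    intro v
    rw [abs_le]
    constructor
    · have h1 := hvm v (Finset.mem_univ v)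
      have h2 : -(φ vm) ≤ M := le_max_right _ _
      linarith
    · have h1 := hvp v (Finset.mem_univ v)
      have h2 : φ vp ≤ M := le_max_left _ _
      linarith
  have hMpos : 0 < M := by
    rcases le_or_gt M 0 with h | h
    · exfalso
      have hz : ∀ v, φ v = 0 := by
        intro v
        have := habs v
        have := abs_nonneg (φ v)
        have : |φ v| = 0 := le_antisymm (by linarith) (abs_nonneg _)
        exact abs_eq_zero.mp this
      have : ∑ v, φ v ^ 2 = 0 := Finset.sum_eq_zero fun v _ => by rw [hz v]; ring
      rw [hnorm] at this
      norm_num at this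
    · exact h
  -- positive and negative parts
  set Sp := ∑ v, max (φ v) 0 with hSpdef
  set Sm := ∑ v, max (-φ v) 0 with hSmdef
  have hSpm : Sp = Sm := by
    have h1 : Sp - Sm = ∑ v, φ v := by
      rw [hSpdef, hSmdef, ← Finset.sum_sub_distrib]
      refine Finset.sum_congr rfl fun v _ => ?_
      rcases le_total (φ v) 0 with h | h
      · rw [max_eq_right h, max_eq_left (by linarith)]
        ring
      · rw [max_eq_left h, max_eq_right (by linarith)]
        ring
    rw [hsum0] at h1
    linarith
  have habs_sum : ∑ v, |φ v| = Sp + Sm := by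
    rw [hSpdef, hSmdef, ← Finset.sum_add_distrib]
    exact Finset.sum_congr rfl fun v _ => (max_zero_add_max_neg_zero_eq_abs_self (φ v)).symm
  have hMS : 1 ≤ 2 * M * Sp := by
    have h1 : (1:ℝ) = ∑ v, φ v ^2 := hnorm.symm
    have h2 : ∑ v, φ v ^2 ≤ ∑ v, M * |φ v| := by
      refine Finset.sum_le_sum fun v _ => ?_
      have h3 := habs v
      have h4 := abs_nonneg (φ v)
      nlinarith [sq_abs (φ v)]
    have h5 : ∑ v, M * |φ v| = M * (Sp + Sm) := by rw [← Finset.mul_sum, habs_sum]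
    have h6 : M * (Sp + Sm) = 2 * M * Sp := by rw [← hSpm]; ring
    linarith
  -- telescoping along the geodesic between extrema
  obtain ⟨q, hqp, hql⟩ := hconn.exists_path_of_dist vp vm
  have htel := walk_telescope φ q
  have hdsum : (q.darts.map (fun d => (φ d.toProd.1 - φ d.toProd.2)^2)).sum ≤ l := by
    have hnodupE : q.edges.Nodup := hqp.isTrail.edges_nodup
    have hnodupD : q.darts.Nodup := by
      have : (q.darts.map SimpleGraph.Dart.edge).Nodup := hnodupE
      exact List.Nodup.of_map _ this
    set vd : G.Dart → ℝ := fun d => (φ d.toProd.1 - φ d.toProd.2)^2 with hvddef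
    have hlist : (q.darts.map vd).sum = ∑ d ∈ q.darts.toFinset, vd d :=
      (List.sum_toFinset _ hnodupD).symm
    set A := q.darts.toFinset with hAdef
    set B := A.image SimpleGraph.Dart.symm with hBdef
    have hInjList := List.inj_on_of_nodup_map (f := SimpleGraph.Dart.edge) (l := q.darts) hnodupE
    have hAB : Disjoint A B := by
      rw [Finset.disjoint_left]
      intro d hdA hdB
      obtain ⟨e, heA, hde⟩ := Finset.mem_image.mp hdB
      have hne : e ≠ d := by
        intro h
        rw [h] at hde
        exact SimpleGraph.Dart.symm_ne d hde
      have hedgeq : e.edge = d.edge := by rw [← hde, SimpleGraph.Dart.edge_symm]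
      exact hne (hInjList (List.mem_toFinset.mp heA) (List.mem_toFinset.mp hdA) hedgeq)
    have hsymm_inj : Function.Injective (SimpleGraph.Dart.symm : G.Dart → G.Dart) :=
      SimpleGraph.Dart.symm_involutive.injective
    have hsumB : ∑ d ∈ B, vd d = ∑ d ∈ A, vd d := by
      rw [hBdef, Finset.sum_image (fun a _ b _ h => hsymm_inj h)]
      refine Finset.sum_congr rfl fun d _ => ?_
      simp only [hvddef, SimpleGraph.Dart.symm_toProd, Prod.fst_swap, Prod.snd_swap]
      ring
    have htoProd_inj : Function.Injective (SimpleGraph.Dart.toProd : G.Dart → V × V) :=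
      SimpleGraph.Dart.toProd_injective
    have himg : ∑ d ∈ A ∪ B, vd d
        = ∑ q' ∈ (A ∪ B).image SimpleGraph.Dart.toProd, (φ q'.1 - φ q'.2)^2 := by
      rw [Finset.sum_image (fun a _ b _ h => htoProd_inj h)]
    have hsub : (A ∪ B).image SimpleGraph.Dart.toProd ⊆
        (Finset.univ ×ˢ Finset.univ).filter (fun q' : V × V => G.Adj q'.1 q'.2) := by
      intro q' hq'
      obtain ⟨d, _, rfl⟩ := Finset.mem_image.mp hq'
      rw [Finset.mem_filter]
      exact ⟨Finset.mem_product.mpr ⟨Finset.mem_univ _, Finset.mem_univ _⟩, d.adj⟩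
    have hfull : ∑ q' ∈ (Finset.univ ×ˢ Finset.univ).filter
        (fun q' : V × V => G.Adj q'.1 q'.2), (φ q'.1 - φ q'.2)^2 = 2 * l := by
      rw [Finset.sum_filter, Finset.univ_product_univ, Fintype.sum_prod_type]
      exact hWphi
    have hUle : ∑ d ∈ A ∪ B, vd d ≤ 2 * l := by
      rw [himg]
      refine le_trans (Finset.sum_le_sum_of_subset_of_nonneg hsub
        (fun _ _ _ => sq_nonneg _)) ?_
      rw [hfull]
    have hUeq : ∑ d ∈ A ∪ B, vd d = 2 * ∑ d ∈ A, vd d := by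
      rw [Finset.sum_union hAB, hsumB]
      ring
    rw [hlist]
    rw [hUeq] at hUle
    linarith
  have hqlenR : (q.length : ℝ) ≤ D := by
    have h1 : q.length ≤ D := by rw [hql]; exact SimpleGraph.dist_le_diam hediam
    exact_mod_cast h1
  have hM2 : M^2 ≤ (D:ℝ) * l := by
    have h2 : M^2 ≤ (φ vp - φ vm)^2 := by nlinarith [hMle, hMpos]
    have hsum_nonneg : 0 ≤ (q.darts.map (fun d => (φ d.toProd.1 - φ d.toProd.2)^2)).sum := by
      apply List.sum_nonneg
      intro a ha
      obtain ⟨d, _, rfl⟩ := List.mem_map.mp ha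
      positivity
    calc M^2 ≤ (φ vp - φ vm)^2 := h2
      _ ≤ (q.length : ℝ) * (q.darts.map (fun d => (φ d.toProd.1 - φ d.toProd.2)^2)).sum := htel
      _ ≤ (D:ℝ) * l := mul_le_mul hqlenR hdsum hsum_nonneg (le_of_lt hD0)
  have hMD : M * Real.sqrt D ≤ 4 := by
    have h0 : (0:ℝ) ≤ D := le_of_lt hD0
    have h1 : (M * Real.sqrt D)^2 ≤ 16 := by
      rw [mul_pow, Real.sq_sqrt h0]
      nlinarith [mul_le_mul_of_nonneg_right hM2 h0, hlD2]
    nlinarith [h1, mul_nonneg hMpos.le (Real.sqrt_nonneg (D:ℝ)),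
      sq_nonneg (M * Real.sqrt (D:ℝ) - 4)]
  have hSp0 : (0:ℝ) ≤ Sp := Finset.sum_nonneg fun v _ => le_max_right _ _
  have hfinal : Real.sqrt D / 8 ≤ Sp := by
    have h1 : Real.sqrt D ≤ 8 * Sp := by
      calc Real.sqrt (D:ℝ) = Real.sqrt (D:ℝ) * 1 := (mul_one _).symm
        _ ≤ Real.sqrt (D:ℝ) * (2 * M * Sp) :=
            mul_le_mul_of_nonneg_left hMS (Real.sqrt_nonneg _)
        _ = 2 * (M * Real.sqrt (D:ℝ)) * Sp := by ring
        _ ≤ 2 * 4 * Sp := by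
            apply mul_le_mul_of_nonneg_right _ hSp0
            linarith [hMD]
        _ = 8 * Sp := by ring
    linarith
  exact ⟨hfinal, by rw [← hSpm]; exact hfinal⟩
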